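/- arXiv:2505.00844 — 4 statements merged into one kernel-verified Lean document; each statement's English description precedes it below -/
import Mathlib

section
/- Suppose A ⊆_TV B are subsets of an L-structure N, c̄ is a finite tuple from N, and tp(c̄/A) is isolated. Then A ∪ range(c̄) is a Tarski–Vaught subset of B ∪ range(c̄), i.e., A c̄ ⊆_TV B c̄. -/
open FirstOrder FirstOrder.Language

/-- `A` is a Tarski–Vaught subset of `B` in the `L`-structure `N`: `A ⊆ B`, and every
`L`-formula `φ(x, ȳ)` with parameters from `A` that has a solution in `B` has a solution
in `A`. -/
def IsTVSubset (L : FirstOrder.Language) (N : Type*) [L.Structure N] (A B : Set N) : Prop :=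
  A ⊆ B ∧ ∀ (n : ℕ) (φ : L.Formula (Fin (n + 1))) (a : Fin n → N),
    (∀ i, a i ∈ A) → (∃ b ∈ B, φ.Realize (Fin.cons b a)) →
      ∃ a' ∈ A, φ.Realize (Fin.cons a' a)

/-- The formula `ψ(x̄, ā)`, with parameters `ā` from `A`, isolates `tp(c̄/A)`. -/
def FormulaIsolates (L : FirstOrder.Language) (N : Type*) [L.Structure N] (A : Set N)
    {k m : ℕ} (c : Fin k → N) (ψ : L.Formula (Fin k ⊕ Fin m)) (a : Fin m → N) : Prop :=
  (∀ i, a i ∈ A) ∧ ψ.Realize (Sum.elim c a) ∧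
    ∀ (m' : ℕ) (φ : L.Formula (Fin k ⊕ Fin m')) (a' : Fin m' → N),
      (∀ i, a' i ∈ A) → φ.Realize (Sum.elim c a') →
        ∀ x : Fin k → N, ψ.Realize (Sum.elim x a) → φ.Realize (Sum.elim x a')

/-- If `A ⊆_TV B` and `tp(c̄/A)` is isolated, then `A c̄ ⊆_TV B c̄`. -/
theorem tv_extend_by_isolated {L : FirstOrder.Language} {N : Type*} [L.Structure N]
    {A B : Set N} (hTV : IsTVSubset L N A B) {k : ℕ} (c : Fin k → N)
    (h : ∃ (m : ℕ) (ψ : L.Formula (Fin k ⊕ Fin m)) (a : Fin m → N),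
      FormulaIsolates L N A c ψ a) :
    IsTVSubset L N (A ∪ Set.range c) (B ∪ Set.range c) := by
  obtain ⟨m, ψ, a₀, ha₀A, hψc, hiso⟩ := h
  obtain ⟨hAB, hTV'⟩ := hTV
  constructor
  · exact Set.union_subset_union_left _ hAB
  · rintro n φ a haA ⟨b, hb, hbφ⟩
    rcases hb with hbB | hbc
    swap
    · exact ⟨b, Or.inr hbc, hbφ⟩
    -- A is nonempty
    obtain ⟨w, hw, -⟩ := hTV' 0 ⊤ default (fun i => i.elim0)
      ⟨b, hbB, by simp [Formula.Realize]⟩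
    -- decompose parameters into an A-part `e` and a `c`-part, via `s`
    classical
    have hsex : ∀ i : Fin n, ∃ x : Fin k ⊕ Fin n,
        Sum.elim c (fun i' => if a i' ∈ A then a i' else w) x = a i := by
      intro i
      by_cases hi : a i ∈ A
      · exact ⟨Sum.inr i, by simp [hi]⟩
      · obtain ⟨j, hj⟩ := (haA i).resolve_left hi
        exact ⟨Sum.inl j, hj⟩
    set e : Fin n → N := fun i' => if a i' ∈ A then a i' else w with he
    have heA : ∀ i, e i ∈ A := by
      intro i
      by_cases hi : a i ∈ A <;> simp [he, hi, hw]
    choose s hs using hsex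
    -- the combined parameter tuple
    set p : Fin (n + m) → N := Fin.append e a₀ with hp
    have hpA : ∀ i, p i ∈ A := by
      intro i
      refine Fin.addCases (fun i' => ?_) (fun i' => ?_) i
      · simpa [hp, Fin.append_left] using heA i'
      · simpa [hp, Fin.append_right] using ha₀A i'
    -- relabeling maps
    set gψ : Fin k ⊕ Fin m → Fin (n + m + 1) ⊕ Fin k :=
      Sum.elim (fun j => Sum.inr j)
        (fun t => Sum.inl (Fin.succ (Fin.natAdd n t))) with hgψ
    set gφ : Fin (n + 1) → Fin (n + m + 1) ⊕ Fin k :=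
      Fin.cases (Sum.inl 0)
        (fun i => Sum.elim (fun j => Sum.inr j)
          (fun i' => Sum.inl (Fin.succ (Fin.castAdd m i'))) (s i)) with hgφ
    set χ : L.Formula (Fin (n + m + 1)) :=
      ((ψ.relabel gψ ⊓ φ.relabel gφ).iExs (Fin k)) with hχdef
    have hχ : ∀ x : N, χ.Realize (Fin.cons x p) ↔
        ∃ d : Fin k → N, ψ.Realize (Sum.elim d a₀) ∧
          φ.Realize (Fin.cons x (Sum.elim d e ∘ s)) := by
      intro x
      rw [hχdef, Formula.realize_iExs]
      apply exists_congr
      intro d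
      have h1 : (fun y => Sum.elim (Fin.cons x p) d (id y)) ∘ gψ = Sum.elim d a₀ := by
        funext y
        rcases y with j | t
        · simp [hgψ]
        · simp [hgψ, hp, Fin.cons_succ, Fin.append_right]
      have h2 : (fun y => Sum.elim (Fin.cons x p) d (id y)) ∘ gφ =
          Fin.cons x (Sum.elim d e ∘ s) := by
        funext y
        refine Fin.cases ?_ (fun i => ?_) y
        · simp [hgφ]
        · rcases hsi : s i with j | i' <;>
            simp [hgφ, hsi, hp, Fin.cons_succ, Fin.append_left]
      change Sum.elim (Fin.cons x p) d ∘ gψ = _ at h1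
      change Sum.elim (Fin.cons x p) d ∘ gφ = _ at h2
      rw [Formula.realize_inf, Formula.realize_relabel, Formula.realize_relabel, h1, h2]
    have hca : Sum.elim c e ∘ s = a := funext hs
    -- b witnesses χ
    have hbχ : χ.Realize (Fin.cons b p) := by
      rw [hχ]
      exact ⟨c, hψc, by rw [hca]; exact hbφ⟩
    obtain ⟨a', ha'A, ha'χ⟩ := hTV' (n + m) χ p hpA ⟨b, hbB, hbχ⟩
    rw [hχ] at ha'χ
    obtain ⟨d, hdψ, hdφ⟩ := ha'χ
    refine ⟨a', Or.inl ha'A, ?_⟩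
    -- use isolation to replace d by c
    set gθ : Fin (n + 1) → Fin k ⊕ Fin (n + 1) :=
      Fin.cases (Sum.inr 0)
        (fun i => Sum.elim (fun j => Sum.inl j)
          (fun i' => Sum.inr (Fin.succ i')) (s i)) with hgθ
    set θ : L.Formula (Fin k ⊕ Fin (n + 1)) := φ.relabel gθ with hθdef
    have hθ : ∀ x : Fin k → N, θ.Realize (Sum.elim x (Fin.cons a' e)) ↔
        φ.Realize (Fin.cons a' (Sum.elim x e ∘ s)) := by
      intro x
      rw [hθdef, Formula.realize_relabel]
      have h3 : Sum.elim x (Fin.cons a' e) ∘ gθ = Fin.cons a' (Sum.elim x e ∘ s) := by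
        funext y
        refine Fin.cases ?_ (fun i => ?_) y
        · simp [hgθ]
        · rcases hsi : s i with j | i' <;> simp [hgθ, hsi, Fin.cons_succ]
      rw [h3]
    have hparA : ∀ i, (Fin.cons a' e : Fin (n+1) → N) i ∈ A := by
      intro i
      refine Fin.cases ?_ (fun i' => ?_) i
      · simpa using ha'A
      · simpa [Fin.cons_succ] using heA i'
    by_contra hcon
    have hθc : θ.not.Realize (Sum.elim c (Fin.cons a' e)) := by
      rw [Formula.realize_not, hθ, hca]
      exact hcon
    have := hiso (n + 1) θ.not (Fin.cons a' e) hparA hθc d hdψ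
    rw [Formula.realize_not, hθ] at this
    exact this hdφ
end

section
/- Let N be an L-structure and (M_n)_{n∈ω} an increasing chain of countable substructures of N whose union is all of N, and suppose that for every n ∈ ω and every finite tuple ā from M_n there is an L-isomorphism f : M_n ≅ M_{n+1} with f(a) = a for every entry a of ā (where M_n is viewed as a substructure of M_{n+1}). Then for every n ∈ ω and every finite tuple ā from M_n there is an L-isomorphism g : M_n ≅ N with g(a) = a for every entry a of ā. (This is the paper's Lemma that M_n ≼_{∞,ω} M* for the union M* of a ≼_{∞,ω}-chain of countable models, using that for countable structures, back-and-forth equivalence over a finite tuple coincides with the existence of an isomorphism fixing that tuple.) -/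
open FirstOrder FirstOrder.Language FirstOrder.Language.Substructure

/-- A partial equivalence is below the partial equivalence of a (total) embedding iff the
embedding agrees with it on its domain. -/
theorem ciu_le_toPartialEquiv_iff {L : FirstOrder.Language} {M N : Type*} [L.Structure M]
    [L.Structure N] {f : M ≃ₚ[L] N} {F : M ↪[L] N} :
    f ≤ F.toPartialEquiv ↔ ∀ x : f.dom, F x = (f.toEquiv x : N) := by
  rw [PartialEquiv.le_def]
  constructor
  · rintro ⟨h, hc⟩ x
    have := DFunLike.congr_fun hc x
    simp [Embedding.toPartialEquiv] at this
    exact this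
  · intro h
    refine ⟨le_top, ?_⟩
    ext x
    simp [Embedding.toPartialEquiv, h x]
    exact h x

/-- Iterating the step isomorphisms: an isomorphism `M m ≅ M m'` fixing a finite tuple. -/
theorem ciu_iter {L : FirstOrder.Language} {N : Type*} [L.Structure N]
    (M : ℕ → L.Substructure N)
    (hstep : ∀ (n k : ℕ) (a : Fin k → M n),
      ∃ f : (M n) ≃[L] (M (n + 1)), ∀ i, (f (a i) : N) = (a i : N)) :
    ∀ (m m' k : ℕ), m ≤ m' → ∀ (b : Fin k → M m),
      ∃ e : (M m) ≃[L] (M m'), ∀ i, (e (b i) : N) = (b i : N) := by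
  intro m m' k h b
  obtain ⟨j, rfl⟩ := Nat.exists_eq_add_of_le h
  clear h
  induction j with
  | zero => exact ⟨FirstOrder.Language.Equiv.refl L _, fun i => rfl⟩
  | succ j ih =>
    obtain ⟨e, he⟩ := ih
    obtain ⟨f, hf⟩ := hstep (m + j) k (fun i => e (b i))
    exact ⟨f.comp e, fun i => (hf i).trans (he i)⟩

/-- Every finite subset of `N` lies in some `M m`. -/
theorem ciu_finite_le {L : FirstOrder.Language} {N : Type*} [L.Structure N]
    (M : ℕ → L.Substructure N) (hmono : Monotone M)
    (hunion : ∀ x : N, ∃ n, x ∈ M n) {s : Set N} (hs : s.Finite) :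
    ∃ m, s ⊆ M m := by
  choose idx hidx using hunion
  refine ⟨hs.toFinset.sup idx, fun x hx => ?_⟩
  exact hmono (Finset.le_sup (hs.mem_toFinset.2 hx)) (hidx x)


/-- The embedding `M n ↪ N` induced by an isomorphism onto `M m`. -/
noncomputable def ciuEmb {L : FirstOrder.Language} {N : Type*} [L.Structure N]
    {M : ℕ → L.Substructure N} {n m : ℕ} (e : (M n) ≃[L] (M m)) : (M n) ↪[L] N :=
  (Substructure.subtype (M m)).comp e.toEmbedding

/-- A "good" partial equivalence: finitely generated, and a restriction of an isomorphism of
`M n` onto some `M m`. -/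
def ciuGood {L : FirstOrder.Language} {N : Type*} [L.Structure N]
    (M : ℕ → L.Substructure N) (n : ℕ) (f : (M n) ≃ₚ[L] N) : Prop :=
  f.dom.FG ∧ ∃ (m : ℕ) (e : (M n) ≃[L] (M m)), f ≤ (ciuEmb e).toPartialEquiv

/-- The witnessing isomorphism of a good partial equivalence can be pushed up the chain. -/
theorem ciu_ext_total {L : FirstOrder.Language} {N : Type*} [L.Structure N]
    {M : ℕ → L.Substructure N}
    (hstep : ∀ (n k : ℕ) (a : Fin k → M n),
      ∃ f : (M n) ≃[L] (M (n + 1)), ∀ i, (f (a i) : N) = (a i : N))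
    {n : ℕ} (f : (M n) ≃ₚ[L] N) (hfg : f.dom.FG) {m' : ℕ} (e : (M n) ≃[L] (M m'))
    (hfe : f ≤ (ciuEmb e).toPartialEquiv) {m'' : ℕ} (hm : m' ≤ m'') :
    ∃ e'' : (M n) ≃[L] (M m''), f ≤ (ciuEmb e'').toPartialEquiv := by
  obtain ⟨t, ht⟩ := f.dom_fg_iff_cod_fg.1 hfg
  have hcodle : ∀ z ∈ f.cod, z ∈ M m' := by
    intro z hz
    have h1 := PartialEquiv.cod_le_cod hfe hz
    obtain ⟨x, rfl⟩ := h1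
    exact (e x).2
  have hbmem : ∀ i : Fin t.card, (↑(t.equivFin.symm i) : N) ∈ M m' :=
    fun i => hcodle _ (ht ▸ Substructure.subset_closure (t.equivFin.symm i).2)
  set b : Fin t.card → M m' := fun i => ⟨↑(t.equivFin.symm i), hbmem i⟩ with hb
  obtain ⟨e', he'⟩ := ciu_iter M hstep m' m'' t.card hm b
  -- `e'` fixes all of `f.cod` pointwise.
  have hfix : ∀ (z : N), z ∈ f.cod → ∀ hz : z ∈ M m', ((e' ⟨z, hz⟩ : M m'') : N) = z := by
    let φ : (M m') →[L] N := (Substructure.subtype (M m'')).toHom.comp e'.toHom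
    let ψ : (M m') →[L] N := (Substructure.subtype (M m')).toHom
    have ht' : f.cod ≤ (Hom.eqLocus φ ψ).map ψ := by
      rw [← ht, Substructure.closure_le]
      intro y hy
      rw [SetLike.mem_coe, Substructure.mem_map]
      refine ⟨b (t.equivFin ⟨y, hy⟩), ?_, ?_⟩
      · show φ _ = ψ _
        exact he' (t.equivFin ⟨y, hy⟩)
      · show (↑(b (t.equivFin ⟨y, hy⟩)) : N) = y
        simp [hb]
    intro z hz1 hz
    obtain ⟨w, hw, hwz⟩ := Substructure.mem_map.1 (ht' hz1)
    have hwe : w = ⟨z, hz⟩ := Subtype.ext hwz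
    rw [← hwe]
    exact (hw : φ w = ψ w).trans hwz
  refine ⟨e'.comp e, ?_⟩
  rw [ciu_le_toPartialEquiv_iff]
  intro x
  have h1 : (ciuEmb e) ↑x = ↑(f.toEquiv x) := ciu_le_toPartialEquiv_iff.1 hfe x
  have hz : (↑(f.toEquiv x) : N) ∈ M m' := by rw [← h1]; exact (e ↑x).2
  have h2 : e ↑x = ⟨↑(f.toEquiv x), hz⟩ := Subtype.ext h1
  show (↑(e' (e ↑x)) : N) = ↑(f.toEquiv x)
  rw [h2]
  exact hfix _ (f.toEquiv x).2 hz

/-- Forth property of good partial equivalences. -/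
theorem ciu_cofL {L : FirstOrder.Language} {N : Type*} [L.Structure N]
    {M : ℕ → L.Substructure N} {n : ℕ} (x : M n)
    (f : {f : (M n) ≃ₚ[L] N // ciuGood M n f}) :
    ∃ g : {f : (M n) ≃ₚ[L] N // ciuGood M n f}, x ∈ g.1.dom ∧ f ≤ g := by
  obtain ⟨f0, fg, m, e, hle⟩ := f
  have hA' : f0.dom ⊔ Substructure.closure L {x} ≤ (ciuEmb e).toPartialEquiv.dom := le_top
  refine ⟨⟨(ciuEmb e).toPartialEquiv.domRestrict hA',
    ⟨fg.sup (Substructure.fg_closure_singleton x), m, e,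
      PartialEquiv.domRestrict_le _ hA'⟩⟩, ?_, ?_⟩
  · show x ∈ f0.dom ⊔ Substructure.closure L {x}
    have h1 : x ∈ Substructure.closure L {x} :=
      Substructure.subset_closure (Set.mem_singleton x)
    exact SetLike.le_def.1 le_sup_right h1
  · exact PartialEquiv.le_domRestrict f0 _ le_sup_left hA' hle

/-- Back property of good partial equivalences. -/
theorem ciu_cofR {L : FirstOrder.Language} {N : Type*} [L.Structure N]
    {M : ℕ → L.Substructure N} (hmono : Monotone M)
    (hunion : ∀ x : N, ∃ n, x ∈ M n)
    (hstep : ∀ (n k : ℕ) (a : Fin k → M n),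
      ∃ f : (M n) ≃[L] (M (n + 1)), ∀ i, (f (a i) : N) = (a i : N))
    {n : ℕ} (y : N) (f : {f : (M n) ≃ₚ[L] N // ciuGood M n f}) :
    ∃ g : {f : (M n) ≃ₚ[L] N // ciuGood M n f}, y ∈ g.1.cod ∧ f ≤ g := by
  obtain ⟨f0, fg, m, e, hle⟩ := f
  obtain ⟨m1, hm1⟩ := hunion y
  obtain ⟨e'', hle''⟩ := ciu_ext_total hstep f0 fg e hle (le_max_left m m1)
  have hy' : y ∈ M (max m m1) := hmono (le_max_right _ _) hm1
  set x0 : M n := e''.symm ⟨y, hy'⟩ with hx0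
  have hA' : f0.dom ⊔ Substructure.closure L {x0} ≤ (ciuEmb e'').toPartialEquiv.dom := le_top
  refine ⟨⟨(ciuEmb e'').toPartialEquiv.domRestrict hA',
    ⟨fg.sup (Substructure.fg_closure_singleton x0), _, e'',
      PartialEquiv.domRestrict_le _ hA'⟩⟩, ?_, ?_⟩
  · have h1 : x0 ∈ Substructure.closure L {x0} :=
      Substructure.subset_closure (Set.mem_singleton x0)
    have h2 : x0 ∈ f0.dom ⊔ Substructure.closure L {x0} := SetLike.le_def.1 le_sup_right h1
    have h3 : (ciuEmb e'') x0 = y := by simp [ciuEmb, hx0]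
    exact ⟨⟨x0, h2⟩, h3⟩
  · exact PartialEquiv.le_domRestrict f0 _ le_sup_left hA' hle''


/-- Let `(M_n)_{n∈ω}` be an increasing chain of countable substructures of `N` whose union is
all of `N`.  If for every `n` and every finite tuple `ā` from `M_n` there is an isomorphism
`M_n ≅ M_{n+1}` fixing `ā` pointwise, then for every `n` and every finite tuple `ā` from `M_n`
there is an isomorphism `M_n ≅ N` fixing `ā` pointwise. -/
theorem chain_iso_union {L : FirstOrder.Language} {N : Type*} [L.Structure N]
    (M : ℕ → L.Substructure N) (hmono : Monotone M)
    (hcount : ∀ n, Countable (M n))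
    (hunion : ∀ x : N, ∃ n, x ∈ M n)
    (hstep : ∀ (n k : ℕ) (a : Fin k → M n),
      ∃ f : (M n) ≃[L] (M (n + 1)), ∀ i, (f (a i) : N) = (a i : N)) :
    ∀ (n k : ℕ) (a : Fin k → M n),
      ∃ g : (M n) ≃[L] N, ∀ i, (g (a i) : N) = (a i : N) := by
  intro n k a
  haveI : ∀ m, Countable (M m) := hcount
  haveI : Countable N := by
    have hsurj : Function.Surjective (fun p : Σ m, M m => (p.2 : N)) := fun x => by
      obtain ⟨m, hm⟩ := hunion x; exact ⟨⟨m, ⟨x, hm⟩⟩, rfl⟩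
    exact hsurj.countable
  -- The starting partial equivalence: the identity on the closure of the tuple `a`.
  have hS0 : Substructure.closure L (Set.range a) ≤
      (ciuEmb (FirstOrder.Language.Equiv.refl L (M n))).toPartialEquiv.dom := le_top
  set p0 : (M n) ≃ₚ[L] N :=
    (ciuEmb (FirstOrder.Language.Equiv.refl L (M n))).toPartialEquiv.domRestrict hS0 with hp0def
  have good0 : ciuGood M n p0 :=
    ⟨Substructure.fg_closure (Set.finite_range a), n, FirstOrder.Language.Equiv.refl L _,
      PartialEquiv.domRestrict_le _ hS0⟩
  have hp0 : ∀ x : p0.dom, (p0.toEquiv x : N) = ↑(↑x : M n) := by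
    intro x
    have h1 := ciu_le_toPartialEquiv_iff.1 (PartialEquiv.domRestrict_le _ hS0) x
    exact h1.symm
  -- Run the back-and-forth construction.
  haveI : Encodable ((M n) ⊕ N) := Encodable.ofCountable _
  let D : (M n) ⊕ N → Order.Cofinal {f : (M n) ≃ₚ[L] N // ciuGood M n f} := fun p =>
    Sum.recOn p (fun x => ⟨{f | x ∈ f.1.dom}, fun f => ciu_cofL x f⟩)
      (fun y => ⟨{f | y ∈ f.1.cod}, fun f => ciu_cofR hmono hunion hstep y f⟩)
  let seq := Order.sequenceOfCofinals (⟨p0, good0⟩ : {f : (M n) ≃ₚ[L] N // ciuGood M n f}) D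
  let S : ℕ →o (M n) ≃ₚ[L] N :=
    ⟨Subtype.val ∘ seq, (Subtype.mono_coe _).comp (Order.sequenceOfCofinals.monotone _ _)⟩
  have dom_top : (DirectLimit.partialEquivLimit S).dom = ⊤ := by
    rw [eq_top_iff]
    intro x _
    have hx := Order.sequenceOfCofinals.encode_mem
      (⟨p0, good0⟩ : {f : (M n) ≃ₚ[L] N // ciuGood M n f}) D (Sum.inl x)
    exact PartialEquiv.dom_le_dom
      (DirectLimit.le_partialEquivLimit S (Encodable.encode (Sum.inl x : (M n) ⊕ N) + 1)) hx
  have cod_top : (DirectLimit.partialEquivLimit S).cod = ⊤ := by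
    rw [eq_top_iff]
    intro y _
    have hy := Order.sequenceOfCofinals.encode_mem
      (⟨p0, good0⟩ : {f : (M n) ≃ₚ[L] N // ciuGood M n f}) D (Sum.inr y)
    exact PartialEquiv.cod_le_cod
      (DirectLimit.le_partialEquivLimit S (Encodable.encode (Sum.inr y : (M n) ⊕ N) + 1)) hy
  refine ⟨PartialEquiv.toEquivOfEqTop dom_top cod_top, fun i => ?_⟩
  have hle0 : p0 ≤ DirectLimit.partialEquivLimit S := DirectLimit.le_partialEquivLimit S 0
  have hmem : a i ∈ p0.dom := Substructure.subset_closure (Set.mem_range_self i)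
  have key : ((DirectLimit.partialEquivLimit S).toEquiv
      ⟨a i, dom_top ▸ Substructure.mem_top _⟩ : N) = ↑(a i) := by
    have h1 := PartialEquiv.toEquiv_inclusion_apply hle0 ⟨a i, hmem⟩
    have h2 : (Substructure.inclusion (PartialEquiv.dom_le_dom hle0) ⟨a i, hmem⟩ :
        (DirectLimit.partialEquivLimit S).dom) = ⟨a i, dom_top ▸ Substructure.mem_top _⟩ :=
      Subtype.ext rfl
    rw [h2] at h1
    rw [h1]
    exact hp0 ⟨a i, hmem⟩
  have h3 := PartialEquiv.toEquivOfEqTop_toEmbedding dom_top cod_top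
  calc (↑(PartialEquiv.toEquivOfEqTop dom_top cod_top (a i)) : N)
      = ((PartialEquiv.toEquivOfEqTop dom_top cod_top).toEmbedding (a i) : N) := rfl
    _ = (PartialEquiv.toEmbeddingOfEqTop dom_top (a i) : N) := by rw [h3]
    _ = ↑(a i) := by rw [PartialEquiv.toEmbeddingOfEqTop_apply]; exact key
end

section
/- Let β be an ordinal and (M_α)_{α≤β} a continuous increasing chain of countable L-structures (meaning M_α ⊆ M_{α'} for α ≤ α', and M_γ = ⋃_{α<γ} M_α for every limit ordinal γ ≤ β), and suppose that for every α < β and every finite tuple ā from M_α there is an L-isomorphism f : M_α ≅ M_{α+1} with f(a) = a for every entry a of ā. Then for every α ≤ β and every finite tuple ā from M_α there is an L-isomorphism g : M_α ≅ M_β with g(a) = a for every entry a of ā. (This is the transfinite chain principle for ≼_{∞,ω} among countable structures used in the proof of the paper's Proposition that a dull pair of countable models M ≼ N satisfies M ≅_A N.) -/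
open FirstOrder FirstOrder.Language

namespace TransfiniteChainAux

open FirstOrder.Language.Substructure FirstOrder.Language.PartialEquiv FirstOrder.Language.Structure

variable {L : FirstOrder.Language} {N : Type*} [L.Structure N]

/-- Tuple-fixing isomorphism relation between substructures of `N`. -/
def Fix (A B : L.Substructure N) : Prop :=
  ∀ (k : ℕ) (a : Fin k → A), ∃ g : A ≃[L] B, ∀ i, (g (a i) : N) = (a i : N)

lemma fix_refl (A : L.Substructure N) : Fix A A :=
  fun _ _ => ⟨FirstOrder.Language.Equiv.refl L A, fun _ => rfl⟩

lemma fix_trans {A B C : L.Substructure N} (h1 : Fix A B) (h2 : Fix B C) :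
    Fix A C := by
  intro k a
  obtain ⟨g1, hg1⟩ := h1 k a
  have hm : ∀ i, ((a i : N)) ∈ B := fun i => hg1 i ▸ (g1 (a i)).2
  obtain ⟨g2, hg2⟩ := h2 k (fun i => ⟨a i, hm i⟩)
  refine ⟨g2.comp g1, fun i => ?_⟩
  have h : g1 (a i) = ⟨(a i : N), hm i⟩ := Subtype.ext (hg1 i)
  show ((g2 (g1 (a i)) : C) : N) = _
  rw [h]
  exact hg2 i

lemma fix_closure {A B : L.Substructure N} (g : A ≃[L] B) (s : Set A)
    (hs : ∀ x ∈ s, (g x : N) = (x : N)) :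
    ∀ x ∈ Substructure.closure L s, (g x : N) = (x : N) := by
  let K : L.Substructure A :=
  { carrier := {x : A | (g x : N) = (x : N)}
    fun_mem := by
      intro n f x hx
      show ((g (funMap f x) : B) : N) = ((funMap f x : A) : N)
      rw [g.map_fun f x]
      show funMap f (fun i => ((g (x i) : B) : N)) = funMap f (fun i => ((x i) : N))
      congr 1
      funext i
      exact hx i }
  intro x hx
  exact (Substructure.closure_le (S := K)).2 hs hx

lemma fix_fg {A B : L.Substructure N} (h : Fix A B) (S : L.Substructure A) (hS : S.FG) :
    ∃ g : A ≃[L] B, ∀ x : A, x ∈ S → (g x : N) = (x : N) := by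
  obtain ⟨s, hfin, hcl⟩ := Substructure.fg_def.1 hS
  haveI := hfin.fintype
  obtain ⟨g, hg⟩ := h (Fintype.card s) (fun i => ((Fintype.equivFin s).symm i : A))
  refine ⟨g, fun x hx => ?_⟩
  refine fix_closure g s (fun y hy => ?_) x (hcl ▸ hx)
  have h2 := hg ((Fintype.equivFin s) ⟨y, hy⟩)
  simpa using h2

/-- Restriction of an embedding to a substructure as a partial equivalence. -/
noncomputable def embPE {M' N' : Type*} [L.Structure M'] [L.Structure N']
    (f : M' ↪[L] N') (S : L.Substructure M') : M' ≃ₚ[L] N' where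
  dom := S
  cod := (f.comp S.subtype).toHom.range
  toEquiv := (f.comp S.subtype).equivRange

@[simp] lemma embPE_dom {M' N' : Type*} [L.Structure M'] [L.Structure N']
    (f : M' ↪[L] N') (S : L.Substructure M') : (embPE f S).dom = S := rfl

lemma embPE_apply {M' N' : Type*} [L.Structure M'] [L.Structure N']
    (f : M' ↪[L] N') (S : L.Substructure M') (x : (embPE f S).dom) :
    (((embPE f S).toEquiv x : N')) = f (x : M') :=
  Embedding.equivRange_apply (f.comp S.subtype) x

lemma mem_embPE_cod {M' N' : Type*} [L.Structure M'] [L.Structure N']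
    (f : M' ↪[L] N') (S : L.Substructure M') {y : N'} :
    y ∈ (embPE f S).cod ↔ ∃ x : S, f (x : M') = y :=
  Hom.mem_range

/-- Key extension step: given a partial equivalence `p` from `A` to `C` which is the
restriction of an isomorphism `g2 : A ≃ B` (with `B ≤ C`), we may extend `p` to a
finitely generated partial equivalence containing any `z : A` in its domain, still a
restriction of `g2`. -/
lemma extend {A B C : L.Substructure N} (hBC : B ≤ C) (p : A ≃ₚ[L] C) (pfg : p.dom.FG)
    (z : A) (g2 : A ≃[L] B)
    (hg2 : ∀ x : p.dom, (g2 (x : A) : N) = ((p.toEquiv x : C) : N)) :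
    ∃ q : A ≃ₚ[L] C, q.dom.FG ∧ p ≤ q ∧
      (∀ y : C, y ∈ q.cod → (y : N) ∈ B) ∧
      (∀ x : q.dom, (g2 (x : A) : N) = ((q.toEquiv x : C) : N)) ∧
      ∃ hz : z ∈ q.dom, ((q.toEquiv ⟨z, hz⟩ : C) : N) = (g2 z : N) := by
  let j : A ↪[L] C := (Substructure.inclusion hBC).comp g2.toEmbedding
  have hj : ∀ x : A, ((j x : C) : N) = (g2 x : N) := fun x => rfl
  let q := embPE j (p.dom ⊔ Substructure.closure L {z})
  have hqval : ∀ x : q.dom, ((q.toEquiv x : C) : N) = (g2 (x : A) : N) := by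
    intro x
    rw [embPE_apply]
    exact hj _
  have hdomle : p.dom ≤ q.dom := le_sup_left
  have hcodle : p.cod ≤ q.cod := by
    intro y hy
    refine (mem_embPE_cod _ _).2 ⟨⟨(p.toEquiv.symm ⟨y, hy⟩ : A),
      hdomle (p.toEquiv.symm ⟨y, hy⟩).2⟩, ?_⟩
    apply Subtype.ext
    rw [hj]
    have h1 := hg2 (p.toEquiv.symm ⟨y, hy⟩)
    rw [h1]
    congr 1
    exact congrArg _ (p.toEquiv.apply_symm_apply ⟨y, hy⟩)
  refine ⟨q, pfg.sup (Substructure.fg_closure_singleton z), ?_, ?_, ?_, ?_⟩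
  · refine PartialEquiv.le_iff.2 ⟨hdomle, hcodle, fun x => ?_⟩
    apply Subtype.ext
    apply Subtype.ext
    show ((p.toEquiv x : C) : N) = ((q.toEquiv (Substructure.inclusion hdomle x) : C) : N)
    rw [hqval]
    exact (hg2 x).symm
  · intro y hy
    obtain ⟨x, hx⟩ := (mem_embPE_cod _ _).1 hy
    rw [← hx, hj]
    exact (g2 (x : A)).2
  · exact fun x => (hqval x).symm
  · refine ⟨(le_sup_right : Substructure.closure L {z} ≤ _) (Substructure.subset_closure (Set.mem_singleton z)), ?_⟩
    exact hqval ⟨z, _⟩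


/-- The goodness predicate: `p` is the restriction of an isomorphism from `M α`
onto some earlier stage `M ε` of the chain, `ε < γ`. -/
def Good (M : Ordinal → L.Substructure N) (α γ : Ordinal)
    (p : L.FGEquiv (M α) (M γ)) : Prop :=
  ∃ ε : Ordinal, ε < γ ∧ (∀ y : (M γ), y ∈ p.1.cod → (y : N) ∈ M ε) ∧
    ∃ g : (M α) ≃[L] (M ε), ∀ x : p.1.dom, (g (x : (M α)) : N) = ((p.1.toEquiv x : (M γ)) : N)

lemma limit_fix {β : Ordinal} {M : Ordinal → L.Substructure N}
    (hmono : ∀ α α' : Ordinal, α ≤ α' → α' ≤ β → M α ≤ M α')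
    (hcount : ∀ α : Ordinal, α ≤ β → Countable (M α))
    {γ : Ordinal} (hγβ : γ ≤ β) (hlim : Order.IsSuccLimit γ)
    (hmem : ∀ x : N, x ∈ M γ → ∃ ρ < γ, x ∈ M ρ)
    (IH : ∀ ε ε' : Ordinal, ε ≤ ε' → ε' < γ → Fix (M ε) (M ε'))
    {α : Ordinal} (hαγ : α < γ) : Fix (M α) (M γ) := by
  intro k a
  haveI : Countable (M α) := hcount α (hαγ.le.trans hγβ)
  haveI : Countable (M γ) := hcount γ hγβ
  haveI : Encodable ((M α) ⊕ (M γ)) := Encodable.ofCountable _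
  have hsub : M α ≤ M γ := hmono α γ hαγ.le hγβ
  -- the cofinal families on the poset of good finitely generated partial equivalences
  have claim_dom : ∀ (p : {p : L.FGEquiv (M α) (M γ) // Good M α γ p}) (m : (M α)),
      ∃ q : {p : L.FGEquiv (M α) (M γ) // Good M α γ p}, m ∈ q.1.1.dom ∧ p ≤ q := by
    rintro ⟨⟨p, pfg⟩, ε, hεγ, hcod, g, hg⟩ m
    obtain ⟨q, qfg, hpq, hqcod, hqval, hz, _⟩ :=
      extend (hmono ε γ hεγ.le hγβ) p pfg m g hg
    exact ⟨⟨⟨q, qfg⟩, ε, hεγ, hqcod, g, fun x => hqval x⟩, hz,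
      Subtype.mk_le_mk.2 (Subtype.mk_le_mk.2 hpq)⟩
  have claim_cod : ∀ (p : {p : L.FGEquiv (M α) (M γ) // Good M α γ p}) (y : (M γ)),
      ∃ q : {p : L.FGEquiv (M α) (M γ) // Good M α γ p}, y ∈ q.1.1.cod ∧ p ≤ q := by
    rintro ⟨⟨p, pfg⟩, ε, hεγ, hcod, g, hg⟩ y
    obtain ⟨ρ, hργ, hyρ⟩ := hmem y y.2
    set ε' := max ε ρ with hε'
    have hε'γ : ε' < γ := max_lt hεγ hργ
    have hεε' : ε ≤ ε' := le_max_left ε ρ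
    have hε'β : ε' ≤ β := hε'γ.le.trans hγβ
    -- find an isomorphism `h : M ε ≃ M ε'` fixing the codomain of `p` pointwise
    have codfg : p.cod.FG := p.dom_fg_iff_cod_fg.1 pfg
    obtain ⟨t, tfin, tcl⟩ := Substructure.fg_def.1 codfg
    have tsub : t ⊆ (p.cod : Set (M γ)) := tcl ▸ Substructure.subset_closure
    let s0 : Set (M ε) := {x : (M ε) | (x : N) ∈ (Subtype.val '' t)}
    have s0fin : s0.Finite :=
      Set.Finite.preimage Subtype.val_injective.injOn (tfin.image Subtype.val)
    obtain ⟨h, hh⟩ := fix_fg (IH ε ε' hεε' hε'γ)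
      (Substructure.closure L s0) (Substructure.fg_closure s0fin)
    have hfix : ∀ (y' : (M γ)) (hy' : y' ∈ p.cod),
        (h ⟨(y' : N), hcod y' hy'⟩ : N) = (y' : N) := by
      intro y' hy'
      apply hh
      have himg : (Substructure.subtype (M ε)).toHom '' s0 = Subtype.val '' t := by
        apply Set.Subset.antisymm
        · rintro n ⟨x, hx, rfl⟩; exact hx
        · rintro n hn
          have hnε : n ∈ M ε := by
            obtain ⟨y'', hy''t, rfl⟩ := hn
            exact hcod y'' (tsub hy''t)
          exact ⟨⟨n, hnε⟩, hn, rfl⟩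
      have h2 : (y' : N) ∈ Substructure.closure L (Subtype.val '' t) := by
        have h3 : (y' : N) ∈ (Substructure.closure L t).map (Substructure.subtype (M γ)).toHom :=
          Substructure.mem_map.2 ⟨y', by rw [tcl]; exact hy', rfl⟩
        rw [Substructure.map_closure] at h3
        exact h3
      have h1 : (y' : N) ∈ (Substructure.closure L s0).map (Substructure.subtype (M ε)).toHom := by
        rw [Substructure.map_closure, himg]
        exact h2
      obtain ⟨x, hxmem, hxeq⟩ := Substructure.mem_map.1 h1
      have hxe : x = ⟨(y' : N), hcod y' hy'⟩ := Subtype.ext hxeq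
      rwa [← hxe]
    -- compose and extend
    have hg2 : ∀ x : p.dom, ((h.comp g) (x : (M α)) : N) = ((p.toEquiv x : (M γ)) : N) := by
      intro x
      have hmemc : ((p.toEquiv x : (M γ))) ∈ p.cod := (p.toEquiv x).2
      have he : g (x : (M α)) = ⟨((p.toEquiv x : (M γ)) : N), hcod _ hmemc⟩ :=
        Subtype.ext (hg x)
      show (h (g (x : (M α))) : N) = _
      rw [he]
      exact hfix _ hmemc
    have hwmem : (y : N) ∈ M ε' := hmono ρ ε' (le_max_right ε ρ) hε'β hyρ
    obtain ⟨q, qfg, hpq, hqcod, hqval, hz, hzval⟩ :=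
      extend (hmono ε' γ hε'γ.le hγβ) p pfg ((h.comp g).symm ⟨(y : N), hwmem⟩) (h.comp g) hg2
    refine ⟨⟨⟨q, qfg⟩, ε', hε'γ, hqcod, h.comp g, fun x => hqval x⟩, ?_,
      Subtype.mk_le_mk.2 (Subtype.mk_le_mk.2 hpq)⟩
    have hq : ((q.toEquiv ⟨_, hz⟩ : (M γ))) = y := by
      apply Subtype.ext
      rw [hzval]
      show ((h.comp g) ((h.comp g).symm ⟨(y : N), hwmem⟩) : N) = (y : N)
      rw [FirstOrder.Language.Equiv.apply_symm_apply]
    exact hq ▸ (q.toEquiv ⟨_, hz⟩).2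
  -- assemble the cofinal families
  let D : (M α) ⊕ (M γ) → Order.Cofinal {p : L.FGEquiv (M α) (M γ) // Good M α γ p} :=
    fun i => match i with
    | Sum.inl m => ⟨{p | m ∈ p.1.1.dom}, fun p => claim_dom p m⟩
    | Sum.inr y => ⟨{p | y ∈ p.1.1.cod}, fun p => claim_cod p y⟩
  -- the starting point: the identity on the substructure generated by the tuple
  let p0 : L.FGEquiv (M α) (M γ) :=
    ⟨embPE (Substructure.inclusion hsub) (Substructure.closure L (Set.range a)),
     Substructure.fg_closure (Set.finite_range a)⟩
  have hp0Good : Good M α γ p0 := by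
    refine ⟨α, hαγ, ?_, FirstOrder.Language.Equiv.refl L (M α), ?_⟩
    · intro y hy
      obtain ⟨x, hx⟩ := (mem_embPE_cod _ _).1 hy
      rw [← hx]
      exact (x : (M α)).2
    · intro x
      rw [embPE_apply]
      rfl
  let seq := Order.sequenceOfCofinals (⟨p0, hp0Good⟩ : {p // Good M α γ p}) D
  let S : ℕ →o (M α) ≃ₚ[L] (M γ) :=
    ⟨fun n => (seq n).1.1,
     fun n m hnm => Order.sequenceOfCofinals.monotone _ D hnm⟩
  let F := FirstOrder.Language.DirectLimit.partialEquivLimit S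
  have domtop : F.dom = ⊤ := by
    rw [eq_top_iff]
    intro m _
    have hm := Order.sequenceOfCofinals.encode_mem
      (⟨p0, hp0Good⟩ : {p // Good M α γ p}) D (Sum.inl m)
    exact PartialEquiv.dom_le_dom
      (FirstOrder.Language.DirectLimit.le_partialEquivLimit S
        (Encodable.encode (Sum.inl m : (M α) ⊕ (M γ)) + 1)) hm
  have codtop : F.cod = ⊤ := by
    rw [eq_top_iff]
    intro y _
    have hy := Order.sequenceOfCofinals.encode_mem
      (⟨p0, hp0Good⟩ : {p // Good M α γ p}) D (Sum.inr y)
    exact PartialEquiv.cod_le_cod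
      (FirstOrder.Language.DirectLimit.le_partialEquivLimit S
        (Encodable.encode (Sum.inr y : (M α) ⊕ (M γ)) + 1)) hy
  refine ⟨PartialEquiv.toEquivOfEqTop domtop codtop, fun i => ?_⟩
  have hle : p0.1 ≤ F := FirstOrder.Language.DirectLimit.le_partialEquivLimit S 0
  have hmemi : (a i) ∈ p0.1.dom := Substructure.subset_closure (Set.mem_range_self i)
  have h1 : (PartialEquiv.toEquivOfEqTop domtop codtop (a i) : (M γ)) =
      F.toEquiv ⟨a i, domtop.symm ▸ Substructure.mem_top _⟩ := by
    have e1 : ⇑(PartialEquiv.toEquivOfEqTop domtop codtop) =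
        ⇑(PartialEquiv.toEmbeddingOfEqTop domtop) := by
      rw [← PartialEquiv.toEquivOfEqTop_toEmbedding domtop codtop]
      rfl
    rw [show (PartialEquiv.toEquivOfEqTop domtop codtop) (a i) =
      (PartialEquiv.toEmbeddingOfEqTop domtop) (a i) from congrFun e1 (a i)]
    rw [PartialEquiv.toEmbeddingOfEqTop_apply]
  have h2 := PartialEquiv.toEquiv_inclusion_apply hle ⟨a i, hmemi⟩
  show ((PartialEquiv.toEquivOfEqTop domtop codtop (a i) : (M γ)) : N) = (a i : N)
  rw [h1]
  rw [show (⟨a i, domtop.symm ▸ Substructure.mem_top _⟩ : F.dom) =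
    Substructure.inclusion (PartialEquiv.dom_le_dom hle) ⟨a i, hmemi⟩ from rfl, h2]
  show ((p0.1.toEquiv ⟨a i, hmemi⟩ : (M γ)) : N) = (a i : N)
  rw [embPE_apply]
  rfl

end TransfiniteChainAux

/-- Transfinite chain principle: if `(M_α)_{α≤β}` is a continuous increasing chain of
countable substructures of `N` (continuous meaning that at limit stages `γ ≤ β` the model
`M_γ` is the union of the earlier ones), and for every `α < β` every finite tuple of `M_α`
is fixed by some isomorphism `M_α ≅ M_{α+1}`, then for every `α ≤ β` every finite tuple of
`M_α` is fixed by some isomorphism `M_α ≅ M_β`. -/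
theorem transfinite_chain_iso {L : FirstOrder.Language} {N : Type*} [L.Structure N]
    (β : Ordinal) (M : Ordinal → L.Substructure N)
    (hmono : ∀ α α' : Ordinal, α ≤ α' → α' ≤ β → M α ≤ M α')
    (hcont : ∀ γ : Ordinal, γ ≤ β → Order.IsSuccLimit γ →
      ∀ x : N, x ∈ M γ ↔ ∃ α < γ, x ∈ M α)
    (hcount : ∀ α : Ordinal, α ≤ β → Countable (M α))
    (hstep : ∀ α : Ordinal, α < β → ∀ (k : ℕ) (a : Fin k → M α),
      ∃ f : (M α) ≃[L] (M (α + 1)), ∀ i, (f (a i) : N) = (a i : N)) :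
    ∀ α : Ordinal, α ≤ β → ∀ (k : ℕ) (a : Fin k → M α),
      ∃ g : (M α) ≃[L] (M β), ∀ i, (g (a i) : N) = (a i : N) := by
  have main : ∀ o : Ordinal, o ≤ β → ∀ α : Ordinal, α ≤ o →
      TransfiniteChainAux.Fix (M α) (M o) := by
    intro o
    induction o using Ordinal.induction with
    | h o IH =>
      intro ho α hαo
      rcases Ordinal.zero_or_succ_or_isSuccLimit o with h0 | ⟨s, hs⟩ | hlim
      · subst h0
        obtain rfl : α = 0 := nonpos_iff_eq_zero.1 hαo
        exact TransfiniteChainAux.fix_refl _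
      · subst hs
        rcases eq_or_lt_of_le hαo with rfl | hlt
        · exact TransfiniteChainAux.fix_refl _
        · have hsβ : s < β := lt_of_lt_of_le (Order.lt_succ s) ho
          have h1 := IH s (Order.lt_succ s) hsβ.le α (Order.lt_succ_iff.1 hlt)
          have h2 : TransfiniteChainAux.Fix (M s) (M (Order.succ s)) := by
            rw [← Ordinal.add_one_eq_succ]
            exact hstep s hsβ
          exact TransfiniteChainAux.fix_trans h1 h2
      · rcases eq_or_lt_of_le hαo with rfl | hlt
        · exact TransfiniteChainAux.fix_refl _
        · exact TransfiniteChainAux.limit_fix hmono hcount ho hlim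
            (fun x hx => (hcont o ho hlim x).1 hx)
            (fun ε ε' h h' => IH ε' h' (h'.le.trans ho) ε h) hlt
  exact main β le_rfl
end

section
/- Let L be a countable first-order language, N an L-structure, and A ⊆ N a countable subset. Then there exists a countable elementary substructure M ≼ N with A ⊆ M such that M is an na-substructure of N: for every finite subset F ⊆ M and every L-formula φ(x, f̄) with parameters f̄ from F, if there exists c ∈ N \ M with N ⊨ φ(c, f̄), then there exists c′ ∈ M with N ⊨ φ(c′, f̄) and c′ ∉ acl(F). -/
open FirstOrder FirstOrder.Language

/-- `b` is algebraic over the finite tuple `f̄`: some formula `α(x, f̄)` satisfied by `b` has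
only finitely many solutions in `N`. -/
def AlgebraicOver (L : FirstOrder.Language) (N : Type*) [L.Structure N] {k : ℕ}
    (f : Fin k → N) (b : N) : Prop :=
  ∃ α : L.Formula (Fin (k + 1)), α.Realize (Fin.cons b f) ∧
    {x : N | α.Realize (Fin.cons x f)}.Finite

namespace NaAux

/-- Countability of bounded formulas over a countable language with countably many variables. -/
lemma countable_sigma_boundedFormula (L : FirstOrder.Language) [Countable L.Symbols]
    (α : Type*) [Countable α] : Countable (Σ n, L.BoundedFormula α n) := by
  haveI : Countable (Σ l, L.Functions l) := Language.Countable.countable_functions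
  haveI : Countable (Σ l, L.Relations l) :=
    (Sum.inr_injective (α := Σ l, L.Functions l)).countable
  haveI : ∀ k : ℕ, Countable (L.Term (α ⊕ Fin k)) := fun k => inferInstance
  haveI : Countable ((Σ k, L.Term (α ⊕ Fin k)) ⊕ ((Σ n, L.Relations n) ⊕ ℕ)) := inferInstance
  exact (Language.BoundedFormula.listEncode_sigma_injective (L := L) (α := α)).countable

lemma countable_formula (L : FirstOrder.Language) [Countable L.Symbols]
    (α : Type*) [Countable α] : Countable (L.Formula α) := by
  haveI := countable_sigma_boundedFormula L α
  have hinj : Function.Injective (fun φ : L.Formula α => (⟨0, φ⟩ : Σ n, L.BoundedFormula α n)) :=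
    fun φ ψ h => eq_of_heq (Sigma.mk.inj_iff.1 h).2
  exact hinj.countable

variable {L : FirstOrder.Language} {N : Type*} [L.Structure N]

open scoped Classical in
/-- A non-algebraic witness for `φ(x, f̄)`, if one exists. -/
noncomputable def wit [Nonempty N] (L : FirstOrder.Language) [L.Structure N] (k : ℕ)
    (f : Fin k → N) (φ : L.Formula (Fin (k + 1))) : N :=
  if h : ∃ b : N, φ.Realize (Fin.cons b f) ∧ ¬ AlgebraicOver L N f b then h.choose
  else Classical.arbitrary N

lemma wit_spec [Nonempty N] {k : ℕ} {f : Fin k → N} {φ : L.Formula (Fin (k + 1))}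
    (h : ∃ b : N, φ.Realize (Fin.cons b f) ∧ ¬ AlgebraicOver L N f b) :
    φ.Realize (Fin.cons (wit L k f φ) f) ∧ ¬ AlgebraicOver L N f (wit L k f φ) := by
  rw [wit, dif_pos h]
  exact h.choose_spec

/-- The set of all non-algebraic witnesses over tuples from `T`. -/
def W [Nonempty N] (L : FirstOrder.Language) [L.Structure N] (T : Set N) : Set N :=
  {b : N | ∃ (k : ℕ) (f : Fin k → N) (φ : L.Formula (Fin (k + 1))),
    (∀ i, f i ∈ T) ∧ b = wit L k f φ}

lemma W_countable [Nonempty N] [Countable L.Symbols] {T : Set N} (hT : T.Countable) :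
    (W L T).Countable := by
  haveI := hT.to_subtype
  haveI : ∀ m : ℕ, Countable (L.Formula (Fin m)) := fun m => countable_formula L (Fin m)
  have hsub : W L T ⊆ Set.range (fun p : (Σ k : ℕ, (Fin k → T) × L.Formula (Fin (k + 1))) =>
      wit L p.1 (fun i => (p.2.1 i : N)) p.2.2) := by
    rintro b ⟨k, f, φ, hf, rfl⟩
    exact ⟨⟨k, fun i => ⟨f i, hf i⟩, φ⟩, rfl⟩
  exact (Set.countable_range _).mono hsub

/-- Any finite definable set (with parameters from an elementary substructure) is contained
in that elementary substructure. -/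
lemma finite_def_subset (M : L.ElementarySubstructure N) :
    ∀ (n k : ℕ) (f : Fin k → N), (∀ i, f i ∈ M) → ∀ φ : L.Formula (Fin (k + 1)),
      {x : N | φ.Realize (Fin.cons x f)}.Finite →
      {x : N | φ.Realize (Fin.cons x f)}.ncard ≤ n →
      ∀ x : N, φ.Realize (Fin.cons x f) → x ∈ M := by
  intro n
  induction n with
  | zero =>
    intro k f hf φ hfin hcard x hx
    have hemp : {x : N | φ.Realize (Fin.cons x f)} = ∅ :=
      (Set.ncard_eq_zero hfin).1 (Nat.le_zero.1 hcard)
    have hx' : x ∈ {x : N | φ.Realize (Fin.cons x f)} := hx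
    rw [hemp] at hx'
    exact hx'.elim
  | succ n ih =>
    intro k f hf φ hfin hcard x hx
    -- find a solution `b₀` of `φ` inside `M`
    let emap : Fin (k + 1) → Fin k ⊕ Fin 1 := Fin.cases (Sum.inr 0) (fun j => Sum.inl j)
    have hcons : ∀ (P : Type _) (y : P) (g : Fin k → P) (w : Fin 1 → P), w 0 = y →
        (fun a => Sum.elim g w (emap a)) = Fin.cons y g := by
      intro P y g w hw
      funext a
      refine Fin.cases ?_ (fun j => ?_) a
      · simp [emap, hw]
      · simp [emap]
    have hχN : ((φ.relabel emap).iExs (Fin 1)).Realize f := by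
      rw [Formula.realize_iExs]
      refine ⟨fun _ => x, ?_⟩
      rw [Formula.realize_relabel, Function.comp_def, hcons N x f (fun _ => x) rfl]
      exact hx
    let xs : Fin k → M := fun i => ⟨f i, hf i⟩
    have hχM : ((φ.relabel emap).iExs (Fin 1)).Realize xs :=
      (M.subtype.map_formula ((φ.relabel emap).iExs (Fin 1)) xs).1 hχN
    rw [Formula.realize_iExs] at hχM
    obtain ⟨w, hw⟩ := hχM
    rw [Formula.realize_relabel, Function.comp_def, hcons M (w 0) xs w rfl] at hw
    have hcomp : (((↑) : M → N) ∘ Fin.cons (w 0) xs) = Fin.cons ((w 0 : N)) f := by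
      funext a
      refine Fin.cases ?_ (fun j => ?_) a <;> simp [xs]
    have hb₀ : φ.Realize (Fin.cons ((w 0 : N)) f) := by
      have h2 := (M.subtype.map_formula φ (Fin.cons (w 0) xs)).2 hw
      rwa [ElementarySubstructure.coe_subtype, hcomp] at h2
    by_cases hxb : x = (w 0 : N)
    · rw [hxb]; exact (w 0).2
    · let g0 : Fin (k + 1) → Fin (k + 2) := Fin.cases 0 (fun j => j.succ.succ)
      let ψ : L.Formula (Fin (k + 2)) :=
        (φ.relabel g0) ⊓ ∼(Term.equal (Term.var (0 : Fin (k + 2))) (Term.var 1))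
      let f' : Fin (k + 1) → N := Fin.cons ((w 0 : N)) f
      have hf' : ∀ i, f' i ∈ M := by
        intro i
        refine Fin.cases ?_ (fun j => ?_) i
        · simpa [f'] using (w 0).2
        · simpa [f'] using hf j
      have hψ : ∀ y : N, ψ.Realize (Fin.cons y f') ↔
          (φ.Realize (Fin.cons y f) ∧ y ≠ (w 0 : N)) := by
        intro y
        have hg : (Fin.cons y f') ∘ g0 = Fin.cons y f := by
          funext a
          refine Fin.cases ?_ (fun j => ?_) a <;> simp [g0, f', Fin.cons_succ]
        have h1 : (Fin.cons y f' : Fin (k + 2) → N) 1 = (w 0 : N) := by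
          rw [← Fin.succ_zero_eq_one, Fin.cons_succ]
          simp [f']
        simp only [ψ, Formula.realize_inf, Formula.realize_not, Formula.realize_relabel, hg,
          Formula.realize_equal, Term.realize_var, Fin.cons_zero, h1]
      have hsub : {y : N | ψ.Realize (Fin.cons y f')} =
          {y : N | φ.Realize (Fin.cons y f)} \ {(w 0 : N)} := by
        ext y
        simp [hψ y, Set.mem_diff]
      have hfin' : {y : N | ψ.Realize (Fin.cons y f')}.Finite := by
        rw [hsub]; exact hfin.diff
      have hb0mem : (w 0 : N) ∈ {x : N | φ.Realize (Fin.cons x f)} := hb₀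
      have hcard' : {y : N | ψ.Realize (Fin.cons y f')}.ncard ≤ n := by
        rw [hsub]
        have := Set.ncard_diff_singleton_add_one hb0mem hfin
        omega
      exact ih (k + 1) f' hf' ψ hfin' hcard' x ((hψ x).2 ⟨hx, hxb⟩)

end NaAux

open NaAux

/-- For a countable language `L`, any countable subset `A` of an `L`-structure `N` is
contained in a countable elementary substructure `M ≼ N` which is moreover an
na-substructure: for every finite tuple `f̄` from `M` and every formula `φ(x, f̄)`, if
`φ(x, f̄)` has a solution in `N \ M`, then it has a solution in `M` that is not algebraic
over `f̄`. -/
theorem exists_countable_na_substructure {L : FirstOrder.Language} [Countable L.Symbols]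
    {N : Type*} [L.Structure N] [Nonempty N] (A : Set N) (hA : A.Countable) :
    ∃ M : L.ElementarySubstructure N, Countable M ∧ A ⊆ (M : Set N) ∧
      ∀ (k : ℕ) (f : Fin k → N), (∀ i, f i ∈ M) →
        ∀ φ : L.Formula (Fin (k + 1)),
          (∃ c : N, c ∉ M ∧ φ.Realize (Fin.cons c f)) →
          ∃ c' : N, c' ∈ M ∧ φ.Realize (Fin.cons c' f) ∧ ¬ AlgebraicOver L N f c' := by
  classical
  -- countability of the Skolem language
  haveI hLcnt : Countable (Σ l, (L.sum L.skolem₁).Functions l) := by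
    haveI h1 : Countable (Σ l, L.Functions l) := Language.Countable.countable_functions
    haveI h2 : Countable (Σ n, L.BoundedFormula Empty n) :=
      countable_sigma_boundedFormula L Empty
    haveI h3 : Countable (Σ l, L.skolem₁.Functions l) := by
      have hinj : Function.Injective
          (fun p : Σ l, L.skolem₁.Functions l =>
            (⟨p.1 + 1, p.2⟩ : Σ n, L.BoundedFormula Empty n)) := by
        rintro ⟨n, φ⟩ ⟨m, ψ⟩ h
        obtain ⟨h1', h2'⟩ := Sigma.mk.inj_iff.1 h
        obtain rfl : n = m := Nat.succ_injective h1'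
        exact Sigma.ext rfl h2'
      exact hinj.countable
    exact Countable.of_equiv _ (Equiv.sigmaSumDistrib L.Functions L.skolem₁.Functions).symm
  -- the increasing chain of Skolem substructures
  let S : ℕ → (L.sum L.skolem₁).Substructure N := fun n =>
    Nat.rec (Substructure.closure (L.sum L.skolem₁) A)
      (fun _ Sp => Substructure.closure (L.sum L.skolem₁) (SetLike.coe Sp ∪ W L (SetLike.coe Sp))) n
  have hScnt : ∀ n, (SetLike.coe (S n)).Countable := by
    intro n
    induction n with
    | zero =>
      rw [← Set.countable_coe_iff]
      exact hA.substructure_closure (L.sum L.skolem₁)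
    | succ n ihn =>
      rw [← Set.countable_coe_iff]
      exact (ihn.union (W_countable ihn)).substructure_closure (L.sum L.skolem₁)
  have hmono : Monotone S := by
    refine monotone_nat_of_le_succ fun n x hx => ?_
    exact Substructure.subset_closure (Or.inl hx)
  let P : (L.sum L.skolem₁).Substructure N := ⨆ n, S n
  have hmemP : ∀ x : N, x ∈ P ↔ ∃ n, x ∈ S n := fun x =>
    Substructure.mem_iSup_of_directed (hmono.directed_le) (x := x)
  have hPcnt : (SetLike.coe P).Countable := by
    have : SetLike.coe P ⊆ ⋃ n, SetLike.coe (S n) := fun x hx => by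
      obtain ⟨n, hn⟩ := (hmemP x).1 hx
      exact Set.mem_iUnion.2 ⟨n, hn⟩
    exact (Set.countable_iUnion hScnt).mono this
  refine ⟨Substructure.elementarySkolem₁Reduct P, ?_, ?_, ?_⟩
  · rw [Substructure.coeSort_elementarySkolem₁Reduct]
    exact hPcnt.to_subtype
  · intro a ha
    have : a ∈ S 0 := Substructure.subset_closure ha
    exact (hmemP a).2 ⟨0, this⟩
  · intro k f hf φ ⟨c, hcM, hcφ⟩
    set M := Substructure.elementarySkolem₁Reduct P with hM
    have hmemM : ∀ x : N, x ∈ M ↔ x ∈ P := fun x => Iff.rfl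
    -- there must be a non-algebraic solution
    have hex : ∃ b : N, φ.Realize (Fin.cons b f) ∧ ¬ AlgebraicOver L N f b := by
      by_contra hcon
      push_neg at hcon
      obtain ⟨α, hcα, hαfin⟩ := hcon c hcφ
      exact hcM (finite_def_subset M ({x : N | α.Realize (Fin.cons x f)}.ncard) k f hf α
        hαfin le_rfl c hcα)
    -- the tuple lies in some stage
    have hfS : ∀ i, ∃ n, f i ∈ S n := fun i => (hmemP (f i)).1 ((hmemM (f i)).1 (hf i))
    choose g hg using hfS
    let m := Finset.univ.sup g
    have hfm : ∀ i, f i ∈ S m := fun i => hmono (Finset.le_sup (Finset.mem_univ i)) (hg i)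
    have hwitW : wit L k f φ ∈ W L (SetLike.coe (S m)) := ⟨k, f, φ, hfm, rfl⟩
    have hwitS : wit L k f φ ∈ S (m + 1) := Substructure.subset_closure (Or.inr hwitW)
    have hwitM : wit L k f φ ∈ M := (hmemM _).2 ((hmemP _).2 ⟨m + 1, hwitS⟩)
    obtain ⟨h1, h2⟩ := wit_spec hex
    exact ⟨wit L k f φ, hwitM, h1, h2⟩
end
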